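/- Let p ≥ 1 and l ≥ 1 be integers, let D be a finite set with |D| = l, and let q be an integer with 1 ≤ q ≤ l. For each j ∈ {1,…,p} let T_j be a nonempty set, let s_j : T_j → ℝ satisfy s_j(t) > 0 for all t, and for each d ∈ D let r_{d,j} : T_j → ℝ be such that t ↦ |r_{d,j}(t)|/s_j(t) is bounded above on T_j. Define the multivariate scores R_d := max_{1≤j≤p} sup_{t∈T_j} |r_{d,j}(t)|/s_j(t), let k be the q-th smallest value of (R_d)_{d∈D}, and for each j and each t ∈ T_j let k̃_j(t) be the q-th smallest value of the family (|r_{d,j}(t)|/s_j(t))_{d∈D}. Then k̃_j(t) ≤ k for every j ∈ {1,…,p} and every t ∈ T_j; consequently, for any functions y_j, μ_j : T_j → ℝ, if |y_j(t) − μ_j(t)| ≤ k̃_j(t) · s_j(t) for all j and all t ∈ T_j, then |y_j(t) − μ_j(t)| ≤ k · s_j(t) for all j and all t ∈ T_j. -/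

import Mathlib

/-- The `q`-th smallest value (counted with multiplicity, `q` starting from 1) of a finite
family of real numbers: the `q`-th entry of the list of values sorted in nondecreasing order. -/
noncomputable def qthSmallest {D : Type*} [Fintype D] (x : D → ℝ) (q : ℕ) : ℝ :=
  (Multiset.sort (Finset.univ.val.map x) (· ≤ ·)).getD (q - 1) 0


lemma sorted_getElem_le_of_countP (L : List ℝ) (hL : L.Pairwise (· ≤ ·)) (i : ℕ)
    (hi : i < L.length) (c : ℝ) (hc : i + 1 ≤ L.countP (fun a => decide (a ≤ c))) :
    L[i] ≤ c := by
  by_contra h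
  push_neg at h
  have hsplit : L = L.take i ++ L.drop i := (List.take_append_drop i L).symm
  have h1 : (L.take i).countP (fun a => decide (a ≤ c)) ≤ i := by
    calc (L.take i).countP _ ≤ (L.take i).length := List.countP_le_length
    _ ≤ i := by simp [List.length_take]
  have h2 : (L.drop i).countP (fun a => decide (a ≤ c)) = 0 := by
    rw [List.countP_eq_zero]
    intro a ha
    obtain ⟨j, hj, rfl⟩ := List.mem_iff_getElem.mp ha
    have hj' : i + j < L.length := by simp [List.length_drop] at hj; try omega
    rw [List.getElem_drop]
    simp only [decide_eq_true_eq, not_le]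
    refine lt_of_lt_of_le h ?_
    rcases Nat.eq_zero_or_pos j with hj0 | hj0
    · simp [hj0]
    · exact (List.pairwise_iff_getElem.mp hL) i (i + j) hi hj' (by omega)
  have := congrArg (List.countP (fun a => decide (a ≤ c))) hsplit
  rw [List.countP_append] at this
  omega

lemma countP_of_sorted_getElem (L : List ℝ) (hL : L.Pairwise (· ≤ ·)) (i : ℕ)
    (hi : i < L.length) :
    i + 1 ≤ L.countP (fun a => decide (a ≤ L[i])) := by
  have hsub : (L.take (i + 1)).Sublist L := List.take_sublist _ _
  have hall : ∀ a ∈ L.take (i + 1), (fun a => decide (a ≤ L[i])) a = true := by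
    intro a ha
    obtain ⟨j, hj, rfl⟩ := List.mem_iff_getElem.mp ha
    simp only [List.getElem_take, decide_eq_true_eq]
    have hjlen : j < L.length := lt_of_lt_of_le hj (by simp [List.length_take]; try omega)
    have hji : j ≤ i := by simp [List.length_take] at hj; try omega
    rcases eq_or_lt_of_le hji with rfl | hlt
    · rfl
    · exact (List.pairwise_iff_getElem.mp hL) j i hjlen hi hlt
  have : (L.take (i + 1)).countP (fun a => decide (a ≤ L[i])) = (L.take (i + 1)).length :=
    List.countP_eq_length.mpr hall
  have hlen : (L.take (i + 1)).length = i + 1 := by simp [List.length_take]; try omega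
  calc i + 1 = (L.take (i + 1)).countP (fun a => decide (a ≤ L[i])) := by omega
  _ ≤ _ := hsub.countP_le

lemma qthSmallest_mono {D : Type*} [Fintype D] {x y : D → ℝ} (h : ∀ d, x d ≤ y d)
    {q : ℕ} (hq1 : 1 ≤ q) (hq2 : q ≤ Fintype.card D) :
    qthSmallest x q ≤ qthSmallest y q := by
  classical
  set Lx := Multiset.sort (Finset.univ.val.map x) (· ≤ ·) with hLxdef
  set Ly := Multiset.sort (Finset.univ.val.map y) (· ≤ ·) with hLydef
  have hLx : Lx.length = Fintype.card D := by
    rw [hLxdef, Multiset.length_sort, Multiset.card_map]; exact Finset.card_univ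
  have hLy : Ly.length = Fintype.card D := by
    rw [hLydef, Multiset.length_sort, Multiset.card_map]; exact Finset.card_univ
  have hix : q - 1 < Lx.length := by omega
  have hiy : q - 1 < Ly.length := by omega
  have hsx : Lx.Pairwise (· ≤ ·) := Multiset.pairwise_sort _ _
  have hsy : Ly.Pairwise (· ≤ ·) := Multiset.pairwise_sort _ _
  unfold qthSmallest
  rw [List.getD_eq_getElem _ _ hix, List.getD_eq_getElem _ _ hiy]
  set c := Ly[q - 1] with hc
  have step1 : q ≤ Ly.countP (fun a => decide (a ≤ c)) := by
    have := countP_of_sorted_getElem Ly hsy (q - 1) hiy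
    rw [← hc] at this
    omega
  have hcoey : Multiset.countP (fun a => a ≤ c) (Finset.univ.val.map y)
      = Ly.countP (fun a => decide (a ≤ c)) := by
    rw [← Multiset.sort_eq (Finset.univ.val.map y) (· ≤ ·), ← hLydef, Multiset.coe_countP]
  have hcoex : Multiset.countP (fun a => a ≤ c) (Finset.univ.val.map x)
      = Lx.countP (fun a => decide (a ≤ c)) := by
    rw [← Multiset.sort_eq (Finset.univ.val.map x) (· ≤ ·), ← hLxdef, Multiset.coe_countP]
  have hmaps : Multiset.countP (fun a => a ≤ c) (Finset.univ.val.map y)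
      ≤ Multiset.countP (fun a => a ≤ c) (Finset.univ.val.map x) := by
    rw [Multiset.countP_map, Multiset.countP_map]
    exact Multiset.card_le_card (Multiset.monotone_filter_right _ (fun d hd => le_trans (h d) hd))
  have step2 : q - 1 + 1 ≤ Lx.countP (fun a => decide (a ≤ c)) := by omega
  exact sorted_getElem_le_of_countP Lx hsx (q - 1) hix c step2

theorem stmt13 (p l : ℕ) (hp : 1 ≤ p) (hl : 1 ≤ l)
    (D : Type) [Fintype D] (hD : Fintype.card D = l)
    (q : ℕ) (hq1 : 1 ≤ q) (hq2 : q ≤ l)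
    (τ : Fin p → Type) (T : (j : Fin p) → Set (τ j)) (hTne : ∀ j, (T j).Nonempty)
    (s : (j : Fin p) → τ j → ℝ) (hs : ∀ j, ∀ t ∈ T j, 0 < s j t)
    (r : D → (j : Fin p) → τ j → ℝ)
    (hbdd : ∀ d j, BddAbove ((fun t => |r d j t| / s j t) '' T j))
    (Rm : D → ℝ)
    (hRm : ∀ d, Rm d = ⨆ j : Fin p, sSup ((fun t => |r d j t| / s j t) '' T j))
    (k : ℝ) (hk : k = qthSmallest Rm q)
    (ktil : (j : Fin p) → τ j → ℝ)
    (hktil : ∀ j, ∀ t ∈ T j, ktil j t = qthSmallest (fun d => |r d j t| / s j t) q) :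
    (∀ j : Fin p, ∀ t ∈ T j, ktil j t ≤ k) ∧
      ∀ y μ : (j : Fin p) → τ j → ℝ,
        (∀ j : Fin p, ∀ t ∈ T j, |y j t - μ j t| ≤ ktil j t * s j t) →
          ∀ j : Fin p, ∀ t ∈ T j, |y j t - μ j t| ≤ k * s j t := by
  classical
  have hmain : ∀ j : Fin p, ∀ t ∈ T j, ktil j t ≤ k := by
    intro j t ht
    rw [hktil j t ht, hk]
    refine qthSmallest_mono ?_ hq1 (by rw [hD]; exact hq2)
    intro d
    rw [hRm d]
    have h1 : |r d j t| / s j t ≤ sSup ((fun t => |r d j t| / s j t) '' T j) :=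
      le_csSup (hbdd d j) ⟨t, ht, rfl⟩
    have h2 : sSup ((fun t => |r d j t| / s j t) '' T j)
        ≤ ⨆ j' : Fin p, sSup ((fun t => |r d j' t| / s j' t) '' T j') :=
      le_ciSup (f := fun j' : Fin p => sSup ((fun t => |r d j' t| / s j' t) '' T j'))
        (Set.finite_range _).bddAbove j
    exact h1.trans h2
  refine ⟨hmain, ?_⟩
  intro y μ hy j t ht
  exact (hy j t ht).trans (mul_le_mul_of_nonneg_right (hmain j t ht) (hs j t ht).le)
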